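/- Let X_F be the flag complex associated to a flag F in a finite-dimensional F_q-vector space, with vertex types given by the dimension of the unique new subspace. For any vertex v of X_F and any type α ∈ T with α ≠ Type(v), the sum of w([v,x]) over all vertices x adjacent to v with Type(x) = α equals w(v), where w denotes the number of top-dimensional simplices containing a given simplex. -/

import Mathlib

open scoped Classical

noncomputable section

variable {F : Type*} [Field F] [Fintype F] {V : Type*} [AddCommGroup V] [Module F V]

/-- A flag in `V`: a chain of nonzero proper subspaces. -/
def IsFlag (C : Finset (Submodule F V)) : Prop :=
  IsChain (· ≤ ·) (C : Set (Submodule F V)) ∧ ∀ W ∈ C, W ≠ ⊥ ∧ W ≠ ⊤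

/-- The number of complete flags (chains of `n+1` nonzero proper subspaces of the
`(n+2)`-dimensional space `V`, i.e. top-dimensional simplices of a flag complex)
containing a given flag `s`. -/
def flagCount (F : Type*) [Field F] {V : Type*} [AddCommGroup V] [Module F V]
    (n : ℕ) (s : Finset (Submodule F V)) : ℕ :=
  Nat.card {C : Finset (Submodule F V) // IsFlag C ∧ C.card = n + 1 ∧ s ⊆ C}


/-- A subset of a flag is a flag. -/
lemma IsFlag.subset {C s : Finset (Submodule F V)} (h : IsFlag C) (hs : s ⊆ C) :
    IsFlag s :=
  ⟨h.1.mono (by exact_mod_cast hs), fun W hW => h.2 W (hs hW)⟩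

/-- The dimension function is injective on a flag. -/
lemma IsFlag.dim_injOn [FiniteDimensional F V] {C : Finset (Submodule F V)}
    (h : IsFlag C) :
    Set.InjOn (fun U : Submodule F V => Module.finrank F ↥U) (C : Set (Submodule F V)) := by
  intro U hU U' hU' hd
  by_contra hne
  rcases h.1 hU hU' hne with hle | hle
  · exact absurd hd (Submodule.finrank_lt_finrank_of_lt (lt_of_le_of_ne hle hne)).ne
  · exact absurd hd.symm
      (Submodule.finrank_lt_finrank_of_lt (lt_of_le_of_ne hle (Ne.symm hne))).ne

/-- In a complete flag in an `(n+2)`-dimensional space, there is exactly one subspace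
of each dimension `α` with `1 ≤ α ≤ n+1`. -/
lemma existsUnique_dim {n α : ℕ} (hV : Module.finrank F V = n + 2)
    {C : Finset (Submodule F V)} (hC : IsFlag C) (hcard : C.card = n + 1)
    (hα1 : 1 ≤ α) (hα2 : α ≤ n + 1) :
    ∃! U : Submodule F V, U ∈ C ∧ Module.finrank F ↥U = α := by
  have hFD : FiniteDimensional F V := FiniteDimensional.of_finrank_pos (by omega)
  have hinj := hC.dim_injOn
  have himg : C.image (fun U : Submodule F V => Module.finrank F ↥U) ⊆
      Finset.Icc 1 (n + 1) := by
    intro a ha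
    rcases Finset.mem_image.1 ha with ⟨U, hU, rfl⟩
    obtain ⟨hbot, htop⟩ := hC.2 U hU
    have h1 : 0 < Module.finrank F ↥U := by
      have : Nontrivial ↥U := Submodule.nontrivial_iff_ne_bot.2 hbot
      exact Module.finrank_pos
    have h2 : Module.finrank F ↥U < n + 2 := by
      rw [← hV]; exact Submodule.finrank_lt htop
    simp only [Finset.mem_Icc]; omega
  have hcard' : (C.image (fun U : Submodule F V => Module.finrank F ↥U)).card = n + 1 := by
    rw [Finset.card_image_of_injOn hinj, hcard]
  have heq : C.image (fun U : Submodule F V => Module.finrank F ↥U) =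
      Finset.Icc 1 (n + 1) :=
    Finset.eq_of_subset_of_card_le himg (by simp [hcard', Nat.add_sub_cancel])
  have hmem : α ∈ C.image (fun U : Submodule F V => Module.finrank F ↥U) := by
    rw [heq]; simp only [Finset.mem_Icc]; omega
  rcases Finset.mem_image.1 hmem with ⟨U, hU, hUd⟩
  refine ⟨U, ⟨hU, hUd⟩, fun U' ⟨hU', hU'd⟩ => hinj hU' hU (by simp only []; rw [hU'd, hUd])⟩

lemma flagCount_eq_card (n : ℕ) [Fintype (Submodule F V)] (s : Finset (Submodule F V)) :
    flagCount F n s =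
      (Finset.univ.filter
        (fun C : Finset (Submodule F V) => IsFlag C ∧ C.card = n + 1 ∧ s ⊆ C)).card := by
  rw [flagCount, Nat.card_eq_fintype_card, Fintype.card_subtype]

/-- in the flag complex `X_F`, for a vertex `v = F ∪ {W}` and a
type `α ≠ Type(v)`, the sum of `w([v,x])` over all vertices `x` of type `α`
adjacent to `v` equals `w(v)`. -/
theorem type_weight_sum (n : ℕ) (hV : Module.finrank F V = n + 2)
    [Fintype (Submodule F V)]
    (Fl : Finset (Submodule F V)) (hF : IsFlag Fl)
    (W : Submodule F V) (hW : W ∉ Fl) (hvert : IsFlag (insert W Fl))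
    (hdim : Fl.card + 1 ≤ n)
    (α : ℕ) (hα1 : 1 ≤ α) (hα2 : α ≤ n + 1)
    (hαF : ∀ U ∈ Fl, Module.finrank F ↥U ≠ α) (hαW : Module.finrank F ↥W ≠ α) :
    ∑ U : Submodule F V,
      (if Module.finrank F ↥U = α ∧ U ∉ insert W Fl ∧ IsFlag (insert U (insert W Fl))
        then flagCount F n (insert U (insert W Fl)) else 0)
      = flagCount F n (insert W Fl) := by
  have hFD : FiniteDimensional F V := FiniteDimensional.of_finrank_pos (by omega)
  set S := insert W Fl with hS
  set T := Finset.univ.filter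
    (fun C : Finset (Submodule F V) => IsFlag C ∧ C.card = n + 1 ∧ S ⊆ C) with hT
  have hUS : ∀ U : Submodule F V, Module.finrank F ↥U = α → U ∉ S := by
    intro U hUα hUmem
    rcases Finset.mem_insert.1 hUmem with rfl | hUF
    · exact hαW hUα
    · exact hαF U hUF hUα
  -- Step A: rewrite each summand
  have stepA : ∀ U : Submodule F V,
      (if Module.finrank F ↥U = α ∧ U ∉ S ∧ IsFlag (insert U S)
        then flagCount F n (insert U S) else 0)
      = ∑ C ∈ T, (if Module.finrank F ↥U = α ∧ U ∈ C then 1 else 0) := by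
    intro U
    have hrhs : ∑ C ∈ T, (if Module.finrank F ↥U = α ∧ U ∈ C then 1 else 0)
        = (T.filter (fun C => Module.finrank F ↥U = α ∧ U ∈ C)).card := by
      rw [Finset.card_filter]
    rw [hrhs]
    by_cases hUα : Module.finrank F ↥U = α
    · by_cases hP : U ∉ S ∧ IsFlag (insert U S)
      · rw [if_pos ⟨hUα, hP⟩, flagCount_eq_card]
        congr 1
        ext C
        simp only [Finset.mem_filter, Finset.mem_univ, true_and, hT,
          Finset.insert_subset_iff]
        tauto
      · rw [if_neg (by tauto)]
        symm
        rw [Finset.card_eq_zero, Finset.filter_eq_empty_iff]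
        rintro C hC ⟨-, hUC⟩
        simp only [hT, Finset.mem_filter, Finset.mem_univ, true_and] at hC
        obtain ⟨hCf, hCcard, hCS⟩ := hC
        exact hP ⟨hUS U hUα, hCf.subset (Finset.insert_subset hUC hCS)⟩
    · rw [if_neg (by tauto)]
      symm
      rw [Finset.card_eq_zero, Finset.filter_eq_empty_iff]
      rintro C hC ⟨h, -⟩
      exact hUα h
  calc ∑ U : Submodule F V,
      (if Module.finrank F ↥U = α ∧ U ∉ S ∧ IsFlag (insert U S)
        then flagCount F n (insert U S) else 0)
      = ∑ U : Submodule F V, ∑ C ∈ T,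
          (if Module.finrank F ↥U = α ∧ U ∈ C then 1 else 0) := by
        exact Finset.sum_congr rfl (fun U _ => stepA U)
    _ = ∑ C ∈ T, ∑ U : Submodule F V,
          (if Module.finrank F ↥U = α ∧ U ∈ C then 1 else 0) := Finset.sum_comm
    _ = ∑ C ∈ T, 1 := by
        refine Finset.sum_congr rfl (fun C hC => ?_)
        simp only [hT, Finset.mem_filter, Finset.mem_univ, true_and] at hC
        obtain ⟨hCf, hCcard, -⟩ := hC
        obtain ⟨U₀, ⟨hU₀C, hU₀α⟩, huniq⟩ := existsUnique_dim hV hCf hCcard hα1 hα2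
        rw [← Finset.card_filter, Finset.card_eq_one]
        refine ⟨U₀, ?_⟩
        ext U
        simp only [Finset.mem_filter, Finset.mem_univ, true_and, Finset.mem_singleton]
        constructor
        · rintro ⟨h1, h2⟩; exact huniq U ⟨h2, h1⟩
        · rintro rfl; exact ⟨hU₀α, hU₀C⟩
    _ = T.card := by simp
    _ = flagCount F n S := (flagCount_eq_card n S).symm

end
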